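/- arXiv:2402.08066 — 3 statements merged into one kernel-verified Lean document; each statement's English description precedes it below -/
import Mathlib

section
/- Let d ≥ 1, let a be a partition of length d, let μ = lcm(1,2,…,d), and let L ∈ 𝓛(d) be a composition of d. Then v(L, μa) is a partition of length d: all of its entries are nonnegative integers and the sequence is weakly decreasing. -/
open Finset

/-- A partition of length `d`: a weakly decreasing sequence of natural numbers. -/
def IsPartition (d : ℕ) (a : Fin d → ℕ) : Prop :=
  ∀ i j : Fin d, i ≤ j → a j ≤ a i

/-- The weight `|a|` of a sequence: the sum of its entries. -/
def weight (d : ℕ) (a : Fin d → ℕ) : ℕ := ∑ i, a i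

/-- The sum of the first `k` entries of `a`. -/
def psum (d : ℕ) (a : Fin d → ℕ) (k : ℕ) : ℕ :=
  ∑ i : Fin d, if (i : ℕ) < k then a i else 0

/-- The extended dominance order on nonzero partitions of length `d`:
`b ⪯ a` iff `|a|·(b₁+⋯+b_k) ≤ |b|·(a₁+⋯+a_k)` for all `1 ≤ k ≤ d-1`. -/
def ExtDom (d : ℕ) (b a : Fin d → ℕ) : Prop :=
  ∀ k : ℕ, 1 ≤ k → k ≤ d - 1 → weight d a * psum d b k ≤ weight d b * psum d a k

/-- `L` is a composition of `d`: a list of positive integers summing to `d`. -/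
def IsComposition (d : ℕ) (L : List ℕ) : Prop :=
  (∀ x ∈ L, 0 < x) ∧ L.sum = d

/-- Given a composition `L` and an index `i`, return the pair
`(start, length)` of the consecutive block of `L` containing position `i`. -/
def blockOf : List ℕ → ℕ → ℕ × ℕ
  | [], _ => (0, 0)
  | l :: L, i =>
      if i < l then (0, l)
      else
        let p := blockOf L (i - l)
        (p.1 + l, p.2)

/-- The sum of the entries of `a` over the block of `L` containing position `i`. -/
def blockSum (d : ℕ) (L : List ℕ) (a : Fin d → ℕ) (i : Fin d) : ℕ :=
  ∑ j : Fin d,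
    if (blockOf L (i : ℕ)).1 ≤ (j : ℕ) ∧ (j : ℕ) < (blockOf L (i : ℕ)).1 + (blockOf L (i : ℕ)).2
    then a j else 0

/-- `v(L, a)`: each consecutive block of `a` (with lengths given by `L`) is replaced by the
constant block whose entries all equal the average of that block. -/
def vSeq (d : ℕ) (L : List ℕ) (a : Fin d → ℕ) (i : Fin d) : ℕ :=
  blockSum d L a i / (blockOf L (i : ℕ)).2

/-- `μ = lcm(1,2,…,d)`. -/
def mu (d : ℕ) : ℕ := (Finset.Icc 1 d).lcm id


lemma blockOf_spec (L : List ℕ) (hpos : ∀ x ∈ L, 0 < x) :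
    ∀ i : ℕ, i < L.sum →
      (blockOf L i).1 ≤ i ∧ i < (blockOf L i).1 + (blockOf L i).2 ∧
      (blockOf L i).2 ∈ L ∧ (blockOf L i).1 + (blockOf L i).2 ≤ L.sum := by
  induction L with
  | nil => intro i hi; simp at hi
  | cons l L ih =>
    intro i hi
    simp only [List.sum_cons] at hi
    by_cases h : i < l
    · simp only [blockOf, if_pos h, List.sum_cons]
      exact ⟨Nat.zero_le _, by omega, List.mem_cons_self, by omega⟩
    · have hrec := ih (fun x hx => hpos x (List.mem_cons_of_mem _ hx)) (i - l) (by omega)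
      simp only [blockOf, if_neg h, List.sum_cons]
      exact ⟨by omega, by omega, List.mem_cons_of_mem _ hrec.2.2.1, by omega⟩

lemma blockOf_mono (L : List ℕ) : ∀ i j : ℕ, i ≤ j →
    blockOf L i = blockOf L j ∨ (blockOf L i).1 + (blockOf L i).2 ≤ (blockOf L j).1 := by
  induction L with
  | nil => intro i j _; left; rfl
  | cons l L ih =>
    intro i j hij
    by_cases hj : j < l
    · left; simp [blockOf, hj, show i < l by omega]
    · by_cases hi : i < l
      · right
        simp only [blockOf, if_pos hi, if_neg hj]
        omega
      · simp only [blockOf, if_neg hi, if_neg hj]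
        rcases ih (i - l) (j - l) (by omega) with h | h
        · left; rw [h]
        · right; omega

/-- Extend `a : Fin d → ℕ` by zero to all of `ℕ`. -/
def extendZ (d : ℕ) (a : Fin d → ℕ) (n : ℕ) : ℕ := if h : n < d then a ⟨n, h⟩ else 0

lemma blockSum_eq_Ico (d : ℕ) (L : List ℕ) (a : Fin d → ℕ) (i : Fin d)
    (h : (blockOf L (i : ℕ)).1 + (blockOf L (i : ℕ)).2 ≤ d) :
    blockSum d L a i
      = ∑ n ∈ Finset.Ico (blockOf L (i : ℕ)).1
          ((blockOf L (i : ℕ)).1 + (blockOf L (i : ℕ)).2), extendZ d a n := by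
  unfold blockSum
  set s := (blockOf L (i : ℕ)).1 with hs
  set e := (blockOf L (i : ℕ)).2 with he
  have h1 : ∀ j : Fin d, (if s ≤ (j : ℕ) ∧ (j : ℕ) < s + e then a j else 0)
      = (fun n => if s ≤ n ∧ n < s + e then extendZ d a n else 0) ((j : ℕ)) := by
    intro j
    simp [extendZ, j.isLt]
  rw [Finset.sum_congr rfl (fun j _ => h1 j),
    Fin.sum_univ_eq_sum_range (fun n => if s ≤ n ∧ n < s + e then extendZ d a n else 0) d,
    ← Finset.sum_filter]
  congr 1
  ext n
  simp only [Finset.mem_filter, Finset.mem_range, Finset.mem_Ico]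
  omega

/-- for a partition `a` of length `d` and a composition `L` of `d`,
`v(L, μa)` is a partition of length `d`: its entries are (nonnegative) integers, i.e. each
block length divides the corresponding block sum of `μa`, and it is weakly decreasing. -/
theorem vSeq_isPartition (d : ℕ) (hd : 1 ≤ d) (a : Fin d → ℕ)
    (ha : IsPartition d a) (L : List ℕ) (hL : IsComposition d L) :
    (∀ i : Fin d, (blockOf L (i : ℕ)).2 ∣ blockSum d L (mu d • a) i) ∧
      IsPartition d (vSeq d L (mu d • a)) := by
  obtain ⟨hpos, hsum⟩ := hL
  -- basic facts about the block of each index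
  have spec : ∀ i : Fin d, (blockOf L (i : ℕ)).1 ≤ (i : ℕ) ∧
      (i : ℕ) < (blockOf L (i : ℕ)).1 + (blockOf L (i : ℕ)).2 ∧
      (blockOf L (i : ℕ)).2 ∈ L ∧
      (blockOf L (i : ℕ)).1 + (blockOf L (i : ℕ)).2 ≤ d := by
    intro i
    have := blockOf_spec L hpos (i : ℕ) (by rw [hsum]; exact i.isLt)
    rw [hsum] at this
    exact this
  have hpos' : ∀ i : Fin d, 0 < (blockOf L (i : ℕ)).2 :=
    fun i => hpos _ (spec i).2.2.1
  have hle : ∀ i : Fin d, (blockOf L (i : ℕ)).2 ≤ d := by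
    intro i
    have := List.single_le_sum (fun x _ => Nat.zero_le x) _ (spec i).2.2.1
    omega
  have hdvd_mu : ∀ i : Fin d, (blockOf L (i : ℕ)).2 ∣ mu d := by
    intro i
    have : (blockOf L (i : ℕ)).2 ∈ Finset.Icc 1 d :=
      Finset.mem_Icc.mpr ⟨hpos' i, hle i⟩
    simpa [mu] using Finset.dvd_lcm (f := id) this
  -- blockSum of μ • a is μ times blockSum of a
  have hmusum : ∀ i : Fin d, blockSum d L (mu d • a) i = mu d * blockSum d L a i := by
    intro i
    unfold blockSum
    rw [Finset.mul_sum]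
    refine Finset.sum_congr rfl fun j _ => ?_
    simp [mul_ite]
  have hdvd : ∀ i : Fin d, (blockOf L (i : ℕ)).2 ∣ blockSum d L (mu d • a) i := by
    intro i
    rw [hmusum i]
    exact (hdvd_mu i).trans (Dvd.intro _ rfl)
  refine ⟨hdvd, ?_⟩
  intro i j hij
  rcases blockOf_mono L (i : ℕ) (j : ℕ) hij with heq | hlt
  · -- same block: values are equal
    unfold vSeq blockSum
    rw [heq]
  · -- different blocks
    set si := (blockOf L (i : ℕ)).1 with hsi
    set ei := (blockOf L (i : ℕ)).2 with hei
    set sj := (blockOf L (j : ℕ)).1 with hsj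
    set ej := (blockOf L (j : ℕ)).2 with hej
    have hi2 := spec i
    have hj2 := spec j
    have hSi : blockSum d L a i = ∑ n ∈ Finset.Ico si (si + ei), extendZ d a n :=
      blockSum_eq_Ico d L a i hi2.2.2.2
    have hSj : blockSum d L a j = ∑ n ∈ Finset.Ico sj (sj + ej), extendZ d a n :=
      blockSum_eq_Ico d L a j hj2.2.2.2
    -- cross comparison: every entry in block i dominates every entry in block j
    have hcross : ∀ p ∈ Finset.Ico si (si + ei), ∀ q ∈ Finset.Ico sj (sj + ej),
        extendZ d a q ≤ extendZ d a p := by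
      intro p hp q hq
      simp only [Finset.mem_Ico] at hp hq
      have hpd : p < d := by omega
      have hqd : q < d := by omega
      have hpq : a ⟨q, hqd⟩ ≤ a ⟨p, hpd⟩ :=
        ha ⟨p, hpd⟩ ⟨q, hqd⟩ (by simp only [Fin.mk_le_mk]; omega)
      simp only [extendZ, dif_pos hpd, dif_pos hqd]
      exact hpq
    -- key inequality on block sums
    have hkey : ei * blockSum d L a j ≤ ej * blockSum d L a i := by
      rw [hSi, hSj]
      calc ei * ∑ n ∈ Finset.Ico sj (sj + ej), extendZ d a n
          = ∑ p ∈ Finset.Ico si (si + ei), ∑ q ∈ Finset.Ico sj (sj + ej), extendZ d a q := by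
            rw [Finset.sum_const, Nat.card_Ico, smul_eq_mul]
            congr 1
            omega
        _ ≤ ∑ p ∈ Finset.Ico si (si + ei), ∑ q ∈ Finset.Ico sj (sj + ej), extendZ d a p :=
            Finset.sum_le_sum fun p hp => Finset.sum_le_sum fun q hq => hcross p hp q hq
        _ = ej * ∑ n ∈ Finset.Ico si (si + ei), extendZ d a n := by
            rw [Finset.mul_sum]
            refine Finset.sum_congr rfl fun p _ => ?_
            rw [Finset.sum_const, Nat.card_Ico, smul_eq_mul]
            congr 1
            omega
    -- conclude for the divided values
    unfold vSeq
    have hdi := hdvd i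
    have hdj := hdvd j
    rw [hmusum i] at hdi
    rw [hmusum j] at hdj
    rw [hmusum i, hmusum j]
    set Si := blockSum d L a i
    set Sj := blockSum d L a j
    have hxi : ei * (mu d * Si / ei) = mu d * Si := Nat.mul_div_cancel' hdi
    have hxj : ej * (mu d * Sj / ej) = mu d * Sj := Nat.mul_div_cancel' hdj
    have hposij : 0 < ei * ej := Nat.mul_pos (hpos' i) (hpos' j)
    refine Nat.le_of_mul_le_mul_left ?_ hposij
    calc ei * ej * (mu d * Sj / ej) = ei * (mu d * Sj) := by
          rw [mul_assoc, hxj]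
      _ = mu d * (ei * Sj) := by ring
      _ ≤ mu d * (ej * Si) := Nat.mul_le_mul_left _ hkey
      _ = ej * (mu d * Si) := by ring
      _ = ei * ej * (mu d * Si / ei) := by
          rw [mul_comm ei ej, mul_assoc, hxi]
end

section
/- Let d ≥ 1, let a be a nonzero partition of length d, and let μ = lcm(1,2,…,d). There exists a constant N (depending only on a) such that every nonzero partition b of length d with b ⪯ a in the extended dominance order and with weight |b| > N can be written as b = b' + v(L, μa) for some composition L ∈ 𝓛(d) and some partition b' of length d which is either zero or satisfies b' ⪯ a in the extended dominance order. -/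
open Finset

namespace SplitAux

/-! ### psum lemmas -/

lemma psum_zero (d : ℕ) (x : Fin d → ℕ) : psum d x 0 = 0 := by
  simp [psum]

lemma psum_succ (d : ℕ) (x : Fin d → ℕ) (k : ℕ) (h : k < d) :
    psum d x (k + 1) = psum d x k + x ⟨k, h⟩ := by
  unfold psum
  have : ∀ i : Fin d, (if (i : ℕ) < k + 1 then x i else 0) =
      (if (i : ℕ) < k then x i else 0) + (if i = ⟨k, h⟩ then x i else 0) := by
    intro i
    rcases lt_trichotomy (i : ℕ) k with h1 | h1 | h1
    · have : i ≠ ⟨k, h⟩ := by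
        intro he; rw [he] at h1; simp at h1
      simp [h1, Nat.lt_succ_of_lt h1, this]
    · have : i = ⟨k, h⟩ := by ext; simpa using h1
      simp [this, h1]
    · have h2 : ¬ ((i:ℕ) < k + 1) := by omega
      have h3 : ¬ ((i:ℕ) < k) := by omega
      have : i ≠ ⟨k, h⟩ := by
        intro he; rw [he] at h1; simp at h1
      simp [h2, h3, this]
  rw [Finset.sum_congr rfl (fun i _ => this i), Finset.sum_add_distrib,
    Finset.sum_ite_eq' univ (⟨k, h⟩ : Fin d) x]
  simp

lemma psum_of_ge (d : ℕ) (x : Fin d → ℕ) (k : ℕ) (h : d ≤ k) :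
    psum d x k = weight d x := by
  unfold psum weight
  apply Finset.sum_congr rfl
  intro i _
  have : (i : ℕ) < k := lt_of_lt_of_le i.isLt h
  simp [this]

lemma psum_mono (d : ℕ) (x : Fin d → ℕ) {k k' : ℕ} (h : k ≤ k') :
    psum d x k ≤ psum d x k' := by
  unfold psum
  apply Finset.sum_le_sum
  intro i _
  by_cases hi : (i : ℕ) < k
  · simp [hi, lt_of_lt_of_le hi h]
  · simp [hi]

lemma psum_band (d : ℕ) (x : Fin d → ℕ) (p q : ℕ) (hpq : p ≤ q) :
    psum d x p + (∑ j : Fin d, if p ≤ (j : ℕ) ∧ (j : ℕ) < q then x j else 0) = psum d x q := by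
  unfold psum
  rw [← Finset.sum_add_distrib]
  apply Finset.sum_congr rfl
  intro i _
  split_ifs <;> omega

lemma psum_smul (d : ℕ) (m : ℕ) (x : Fin d → ℕ) (k : ℕ) :
    psum d (m • x) k = m * psum d x k := by
  unfold psum
  rw [Finset.mul_sum]
  apply Finset.sum_congr rfl
  intro i _
  by_cases h : (i : ℕ) < k <;> simp [h]


/-! ### GoodL : block decomposition with properties -/

def GoodL (P : ℕ → ℕ → Prop) (Q : ℕ → Prop) : ℕ → List ℕ → Prop
  | _, [] => True
  | p, l :: L => 0 < l ∧ P p (p + l) ∧ Q (p + l) ∧ GoodL P Q (p + l) L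

lemma goodL_append (P : ℕ → ℕ → Prop) (Q : ℕ → Prop) :
    ∀ (L₁ L₂ : List ℕ) (p : ℕ), GoodL P Q p L₁ → GoodL P Q (p + L₁.sum) L₂ →
      GoodL P Q p (L₁ ++ L₂)
  | [], L₂, p, _, h2 => by simpa using h2
  | l :: L₁, L₂, p, h1, h2 => by
    obtain ⟨hl, hP, hQ, hrest⟩ := h1
    refine ⟨hl, hP, hQ, goodL_append P Q L₁ L₂ (p + l) hrest ?_⟩
    have : p + (l :: L₁).sum = p + l + L₁.sum := by simp [List.sum_cons]; ring
    rwa [this] at h2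

lemma goodL_spec (P : ℕ → ℕ → Prop) (Q : ℕ → Prop) :
    ∀ (L : List ℕ) (base i : ℕ), GoodL P Q base L → i < L.sum →
      0 < (blockOf L i).2 ∧ (blockOf L i).1 ≤ i ∧ i < (blockOf L i).1 + (blockOf L i).2 ∧
      (blockOf L i).1 + (blockOf L i).2 ≤ L.sum ∧
      P (base + (blockOf L i).1) (base + (blockOf L i).1 + (blockOf L i).2) ∧
      Q (base + (blockOf L i).1 + (blockOf L i).2) ∧
      (∀ j, (blockOf L i).1 ≤ j → j < (blockOf L i).1 + (blockOf L i).2 →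
        blockOf L j = blockOf L i)
  | [], base, i, _, hi => by simp at hi
  | l :: L, base, i, hg, hi => by
    obtain ⟨hl, hP, hQ, hrest⟩ := hg
    by_cases h : i < l
    · have hb : blockOf (l :: L) i = (0, l) := by simp [blockOf, h]
      rw [hb]
      refine ⟨hl, by simp, by simpa using h, by simp [List.sum_cons], by simpa using hP,
        by simpa using hQ, ?_⟩
      intro j _ hj
      simp at hj
      simp [blockOf, hj]
    · push_neg at h
      have hi' : i - l < L.sum := by
        simp [List.sum_cons] at hi; omega
      obtain ⟨h1, h2, h3, h4, h5, h6, h7⟩ := goodL_spec P Q L (base + l) (i - l) hrest hi'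
      have hb : blockOf (l :: L) i = ((blockOf L (i - l)).1 + l, (blockOf L (i - l)).2) := by
        simp [blockOf, not_lt.2 h]
      rw [hb]
      refine ⟨h1, by omega, by omega, by simp [List.sum_cons]; omega, ?_, ?_, ?_⟩
      · have : base + ((blockOf L (i - l)).1 + l) = base + l + (blockOf L (i - l)).1 := by ring
        rw [this]
        exact h5
      · have : base + ((blockOf L (i - l)).1 + l) + (blockOf L (i - l)).2
            = base + l + (blockOf L (i - l)).1 + (blockOf L (i - l)).2 := by ring
        rw [this]
        exact h6
      · intro j hj1 hj2
        have hjl : ¬ j < l := by omega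
        have : blockOf (l :: L) j = ((blockOf L (j - l)).1 + l, (blockOf L (j - l)).2) := by
          simp [blockOf, hjl]
        rw [this, h7 (j - l) (by omega) (by omega)]

lemma goodL_pos (P : ℕ → ℕ → Prop) (Q : ℕ → Prop) :
    ∀ (L : List ℕ) (p : ℕ), GoodL P Q p L → ∀ x ∈ L, 0 < x
  | [], _, _ => by simp
  | l :: L, p, h => by
    obtain ⟨hl, _, _, hrest⟩ := h
    intro x hx
    rcases List.mem_cons.1 hx with h | h
    · omega
    · exact goodL_pos P Q L (p + l) hrest x h


/-! ### Core integer arithmetic -/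

section Core

variable (d : ℕ) (A B : ℕ → ℤ) (W V μ : ℤ)

/-- The chord condition on a block `(p, q]`. -/
def ChordOK (p q : ℕ) : Prop :=
  ∀ k : ℕ, p < k → k < q →
    W * μ * (((q : ℤ) - p) * A k - ((k : ℤ) - p) * A q - ((q : ℤ) - k) * A p) ≤
      ((q : ℤ) - p) * (V * A k - W * B k)

/-- A big drop of `b` at boundary position `j`. -/
def BigDrop (j : ℕ) : Prop :=
  1 ≤ j ∧ j + 1 ≤ d ∧ B (j - 1) + B (j + 1) + μ * A 1 ≤ 2 * B j

variable {d A B W V μ}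

lemma emono (hBdec : ∀ j, 1 ≤ j → j + 1 ≤ d → B (j + 1) + B (j - 1) ≤ 2 * B j) :
    ∀ (n i : ℕ), i + n + 1 ≤ d → B (i + n + 1) - B (i + n) ≤ B (i + 1) - B i := by
  intro n
  induction n with
  | zero => intro i _; simp
  | succ m ih =>
    intro i hle
    have h1 := hBdec (i + m + 1) (by omega) (by omega)
    have h2 := ih i (by omega)
    have e1 : i + m + 1 - 1 = i + m := by omega
    rw [e1] at h1
    have e2 : i + (m + 1) = i + m + 1 := by omega
    have e3 : i + (m + 1) + 1 = i + m + 1 + 1 := by omega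
    simp only [e2, e3]
    linarith

set_option maxHeartbeats 1000000 in
lemma dropExists
    (hW : 1 ≤ W) (hμ : 1 ≤ μ) (hA1 : 0 ≤ A 1)
    (hWB : ∀ k, W * B k ≤ V * A k)
    (hBdec : ∀ j, 1 ≤ j → j + 1 ≤ d → B (j + 1) + B (j - 1) ≤ 2 * B j)
    (hV : W * (d : ℤ) ^ 3 * μ * A 1 + W * μ < V)
    (p k₀ q : ℕ) (hpk : p < k₀) (hkq : k₀ < q) (hqd : q ≤ d)
    (hviol : ((q : ℤ) - p) * (V * A k₀ - W * B k₀) <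
      W * μ * (((q : ℤ) - p) * A k₀ - ((k₀ : ℤ) - p) * A q - ((q : ℤ) - k₀) * A p)) :
    ∃ j, p < j ∧ j < q ∧ BigDrop d A B μ j := by
  classical
  by_contra hno
  push_neg at hno
  have hu0 : (0 : ℤ) < (k₀ : ℤ) - p := by
    have : (p : ℤ) < k₀ := by exact_mod_cast hpk
    linarith
  have hw0 : (0 : ℤ) < (q : ℤ) - k₀ := by
    have : (k₀ : ℤ) < q := by exact_mod_cast hkq
    linarith
  have hsl : 0 ≤ V * A k₀ - W * B k₀ := by linarith [hWB k₀]
  have hδ1 : (1 : ℤ) ≤ ((q : ℤ) - k₀) * (A k₀ - A p) - ((k₀ : ℤ) - p) * (A q - A k₀) := by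
    by_contra hcon
    push_neg at hcon
    have hδ0 : ((q : ℤ) - k₀) * (A k₀ - A p) - ((k₀ : ℤ) - p) * (A q - A k₀) ≤ 0 := by
      have := Int.lt_add_one_iff.mp (show ((q : ℤ) - k₀) * (A k₀ - A p) - ((k₀ : ℤ) - p) * (A q - A k₀) < 0 + 1 by linarith)
      linarith
    have h1 : W * μ * (((q : ℤ) - p) * A k₀ - ((k₀ : ℤ) - p) * A q - ((q : ℤ) - k₀) * A p)
        ≤ 0 := by
      have hWμ : (0 : ℤ) ≤ W * μ := by positivity
      have : ((q : ℤ) - p) * A k₀ - ((k₀ : ℤ) - p) * A q - ((q : ℤ) - k₀) * A p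
          = ((q : ℤ) - k₀) * (A k₀ - A p) - ((k₀ : ℤ) - p) * (A q - A k₀) := by ring
      rw [this]
      exact mul_nonpos_of_nonneg_of_nonpos hWμ hδ0
    have h2 : 0 ≤ ((q : ℤ) - p) * (V * A k₀ - W * B k₀) := mul_nonneg (by linarith) hsl
    linarith
  have e1 : ((q:ℤ) - k₀) * (W * B p) ≤ ((q:ℤ) - k₀) * (V * A p) :=
    mul_le_mul_of_nonneg_left (hWB p) (le_of_lt hw0)
  have e2 : ((k₀:ℤ) - p) * (W * B q) ≤ ((k₀:ℤ) - p) * (V * A q) :=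
    mul_le_mul_of_nonneg_left (hWB q) (le_of_lt hu0)
  have h1 : V * (((q : ℤ) - k₀) * (A k₀ - A p) - ((k₀ : ℤ) - p) * (A q - A k₀))
      ≤ ((q : ℤ) - p) * (V * A k₀ - W * B k₀)
        + W * (((q:ℤ) - k₀) * (B k₀ - B p) - ((k₀:ℤ) - p) * (B q - B k₀)) := by
    nlinarith [e1, e2]
  have hVW : 0 ≤ V - W * μ := by
    have h0 : (0:ℤ) ≤ W * (d : ℤ) ^ 3 * μ * A 1 :=
      mul_nonneg (mul_nonneg (mul_nonneg (by linarith) (by positivity)) (by linarith)) hA1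
    linarith
  have hviol2 : ((q : ℤ) - p) * (V * A k₀ - W * B k₀) <
      W * μ * (((q : ℤ) - k₀) * (A k₀ - A p) - ((k₀ : ℤ) - p) * (A q - A k₀)) := by
    have : ((q : ℤ) - p) * A k₀ - ((k₀ : ℤ) - p) * A q - ((q : ℤ) - k₀) * A p
        = ((q : ℤ) - k₀) * (A k₀ - A p) - ((k₀ : ℤ) - p) * (A q - A k₀) := by ring
    rw [this] at hviol
    exact hviol
  have h2 : V - W * μ < W * (((q:ℤ) - k₀) * (B k₀ - B p) - ((k₀:ℤ) - p) * (B q - B k₀)) := by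
    nlinarith [h1, hviol2, hδ1, hVW]
  -- telescoping sums
  have hsum1 : B k₀ - B p = ∑ i ∈ Finset.range (k₀ - p), (B (p + i + 1) - B (p + i)) := by
    have h := Finset.sum_range_sub (f := fun i => B (p + i)) (n := k₀ - p)
    have h' : p + (k₀ - p) = k₀ := by omega
    rw [h'] at h
    simpa [add_assoc] using h.symm
  have hsum2 : B q - B k₀ = ∑ i ∈ Finset.range (q - k₀), (B (k₀ + i + 1) - B (k₀ + i)) := by
    have h := Finset.sum_range_sub (f := fun i => B (k₀ + i)) (n := q - k₀)
    have h' : k₀ + (q - k₀) = q := by omega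
    rw [h'] at h
    simpa [add_assoc] using h.symm
  have hbd1 : B k₀ - B p ≤ ((k₀ : ℤ) - p) * (B (p + 1) - B p) := by
    rw [hsum1]
    have := Finset.sum_le_card_nsmul (Finset.range (k₀ - p))
      (fun i => B (p + i + 1) - B (p + i)) (B (p + 1) - B p) ?_
    · rw [Finset.card_range, nsmul_eq_mul] at this
      have hc : ((k₀ - p : ℕ) : ℤ) = (k₀ : ℤ) - p := by
        have := hpk.le; push_cast [this]; ring
      rw [hc] at this
      exact this
    · intro i hi
      simp only [Finset.mem_range] at hi
      exact emono hBdec i p (by omega)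
  have hbd2 : ((q : ℤ) - k₀) * (B q - B (q - 1)) ≤ B q - B k₀ := by
    rw [hsum2]
    have := Finset.card_nsmul_le_sum (Finset.range (q - k₀))
      (fun i => B (k₀ + i + 1) - B (k₀ + i)) (B q - B (q - 1)) ?_
    · rw [Finset.card_range, nsmul_eq_mul] at this
      have hc : ((q - k₀ : ℕ) : ℤ) = (q : ℤ) - k₀ := by
        have := hkq.le; push_cast [this]; ring
      rw [hc] at this
      exact this
    · intro i hi
      simp only [Finset.mem_range] at hi
      have h := emono hBdec (q - 1 - (k₀ + i)) (k₀ + i) (by omega)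
      have e4 : k₀ + i + (q - 1 - (k₀ + i)) + 1 = q := by omega
      have e5 : k₀ + i + (q - 1 - (k₀ + i)) = q - 1 := by omega
      rw [e4, e5] at h
      exact h
  -- big drop of entry differences on the whole interval
  have h3 : V - W * μ <
      W * (((k₀:ℤ) - p) * ((q:ℤ) - k₀) * ((B (p + 1) - B p) - (B q - B (q - 1)))) := by
    have hW0 : (0 : ℤ) ≤ W := by linarith
    have m1 := mul_le_mul_of_nonneg_left hbd1 (le_of_lt hw0)
    have m2 := mul_le_mul_of_nonneg_left hbd2 (le_of_lt hu0)
    have m3 : ((q:ℤ) - k₀) * (B k₀ - B p) - ((k₀:ℤ) - p) * (B q - B k₀) ≤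
        ((k₀:ℤ) - p) * ((q:ℤ) - k₀) * ((B (p + 1) - B p) - (B q - B (q - 1))) := by
      nlinarith [m1, m2]
    have m4 := mul_le_mul_of_nonneg_left m3 hW0
    exact lt_of_lt_of_le h2 m4
  have hX : (d : ℤ) * (μ * A 1) <
      (B (p + 1) - B p) - (B q - B (q - 1)) := by
    have hW0 : (0 : ℤ) < W := by linarith
    have hd3 : W * ((d:ℤ)^3 * (μ * A 1)) < W * (((k₀:ℤ) - p) * ((q:ℤ) - k₀) *
        ((B (p + 1) - B p) - (B q - B (q - 1)))) := by nlinarith [h3, hV, hVW]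
    have h4 : (d:ℤ)^3 * (μ * A 1) < ((k₀:ℤ) - p) * ((q:ℤ) - k₀) *
        ((B (p + 1) - B p) - (B q - B (q - 1))) := lt_of_mul_lt_mul_left hd3 (le_of_lt hW0)
    have hμA : (0:ℤ) ≤ μ * A 1 := mul_nonneg (by linarith) hA1
    have hXpos : 0 < (B (p + 1) - B p) - (B q - B (q - 1)) := by
      by_contra hc
      push_neg at hc
      have hd3nn : (0:ℤ) ≤ (d:ℤ)^3 * (μ * A 1) := mul_nonneg (by positivity) hμA
      have huw : (0:ℤ) ≤ ((k₀:ℤ) - p) * ((q:ℤ) - k₀) := mul_nonneg hu0.le hw0.le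
      have := mul_nonpos_of_nonneg_of_nonpos huw hc
      linarith
    have hud : ((k₀:ℤ) - p) ≤ d := by
      have h5 : (k₀ : ℤ) ≤ d := by exact_mod_cast le_trans hkq.le hqd
      have h6 : (0 : ℤ) ≤ p := by positivity
      linarith
    have hwd : ((q:ℤ) - k₀) ≤ d := by
      have h5 : (q : ℤ) ≤ d := by exact_mod_cast hqd
      have h6 : (0 : ℤ) ≤ k₀ := by positivity
      linarith
    have hdpos : (0:ℤ) < d := by
      have : 0 < q := by omega
      have : 0 < d := by omega
      exact_mod_cast this
    have s1 : ((k₀:ℤ) - p) * ((q:ℤ) - k₀) * ((B (p + 1) - B p) - (B q - B (q - 1)))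
        ≤ (d:ℤ) * ((q:ℤ) - k₀) * ((B (p + 1) - B p) - (B q - B (q - 1))) :=
      mul_le_mul_of_nonneg_right (mul_le_mul_of_nonneg_right hud hw0.le) hXpos.le
    have s2 : (d:ℤ) * ((q:ℤ) - k₀) * ((B (p + 1) - B p) - (B q - B (q - 1)))
        ≤ (d:ℤ) * (d:ℤ) * ((B (p + 1) - B p) - (B q - B (q - 1))) :=
      mul_le_mul_of_nonneg_right (mul_le_mul_of_nonneg_left hwd (by positivity)) hXpos.le
    have h7 := lt_of_lt_of_le h4 (s1.trans s2)
    have e8 : (d:ℤ)^3 * (μ * A 1) = (d:ℤ) * (d:ℤ) * ((d:ℤ) * (μ * A 1)) := by ring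
    rw [e8] at h7
    exact lt_of_mul_lt_mul_left h7 (by positivity)
  -- pigeonhole: no big drops but total drop is large
  have hXsum : (B (p + 1) - B p) - (B q - B (q - 1)) =
      ∑ i ∈ Finset.range (q - 1 - p),
        ((B (p + i + 1) - B (p + i)) - (B (p + i + 1 + 1) - B (p + i + 1))) := by
    have h := Finset.sum_range_sub' (f := fun i => B (p + i + 1) - B (p + i)) (n := q - 1 - p)
    have h' : p + (q - 1 - p) = q - 1 := by omega
    have h'' : q - 1 + 1 = q := by omega
    simp only [h'] at h
    rw [h''] at h
    exact h.symm
  have hterm : ∀ i ∈ Finset.range (q - 1 - p),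
      (B (p + i + 1) - B (p + i)) - (B (p + i + 1 + 1) - B (p + i + 1)) ≤ μ * A 1 - 1 := by
    intro i hi
    simp only [Finset.mem_range] at hi
    have hnb := hno (p + i + 1) (by omega) (by omega)
    unfold BigDrop at hnb
    push_neg at hnb
    have := hnb (by omega) (by omega)
    have e6 : p + i + 1 - 1 = p + i := by omega
    rw [e6] at this
    have h9 : (B (p + i + 1) - B (p + i)) - (B (p + i + 1 + 1) - B (p + i + 1)) < μ * A 1 := by
      linarith
    have := Int.lt_iff_add_one_le.mp h9
    linarith
  have hle := Finset.sum_le_card_nsmul (Finset.range (q - 1 - p))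
    (fun i => (B (p + i + 1) - B (p + i)) - (B (p + i + 1 + 1) - B (p + i + 1)))
    (μ * A 1 - 1) hterm
  rw [Finset.card_range, nsmul_eq_mul] at hle
  rw [hXsum] at hX
  have hn : ((q - 1 - p : ℕ) : ℤ) ≤ d := by
    have : q - 1 - p ≤ d := by omega
    exact_mod_cast this
  have hμA : (0:ℤ) ≤ μ * A 1 := mul_nonneg (by linarith) hA1
  have hnn : (0:ℤ) ≤ ((q - 1 - p : ℕ) : ℤ) := by positivity
  have s3 : ((q - 1 - p : ℕ) : ℤ) * (μ * A 1 - 1) ≤ ((q - 1 - p : ℕ) : ℤ) * (μ * A 1) := by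
    nlinarith [hnn]
  have s4 : ((q - 1 - p : ℕ) : ℤ) * (μ * A 1) ≤ (d:ℤ) * (μ * A 1) :=
    mul_le_mul_of_nonneg_right hn hμA
  linarith

set_option maxHeartbeats 1000000 in
lemma cutsExist
    (hW : 1 ≤ W) (hμ : 1 ≤ μ) (hA1 : 0 ≤ A 1)
    (hWB : ∀ k, W * B k ≤ V * A k)
    (hBdec : ∀ j, 1 ≤ j → j + 1 ≤ d → B (j + 1) + B (j - 1) ≤ 2 * B j)
    (hV : W * (d : ℤ) ^ 3 * μ * A 1 + W * μ < V) :
    ∀ (n p q : ℕ), q ≤ p + n → p < q → q ≤ d → (q = d ∨ BigDrop d A B μ q) →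
      ∃ Lc : List ℕ, Lc.sum = q - p ∧
        GoodL (ChordOK A B W V μ) (fun x => x = d ∨ BigDrop d A B μ x) p Lc := by
  intro n
  induction n with
  | zero => intro p q h1 h2 _ _; omega
  | succ m ih =>
    intro p q h1 h2 hqd hq
    by_cases hch : ChordOK A B W V μ p q
    · refine ⟨[q - p], by simp, ?_⟩
      have hpq : p + (q - p) = q := by omega
      exact ⟨by omega, by rwa [hpq], by rwa [hpq], trivial⟩
    · unfold ChordOK at hch
      push_neg at hch
      obtain ⟨k₀, hpk, hkq, hviol⟩ := hch
      obtain ⟨j, hpj, hjq, hbd⟩ := dropExists hW hμ hA1 hWB hBdec hV p k₀ q hpk hkq hqd hviol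
      obtain ⟨L₁, hs1, hg1⟩ := ih p j (by omega) hpj (by omega) (Or.inr hbd)
      obtain ⟨L₂, hs2, hg2⟩ := ih j q (by omega) hjq hqd hq
      refine ⟨L₁ ++ L₂, by simp [hs1, hs2]; omega, ?_⟩
      apply goodL_append
      · exact hg1
      · rw [hs1]
        have : p + (j - p) = j := by omega
        rw [this]
        exact hg2

end Core

end SplitAux

open SplitAux in
set_option maxHeartbeats 2000000 in
/-- there is a bound `N` (depending only on `a`) such that every nonzero
partition `b ⪯ a` of weight `> N` can be written as `b = b' + v(L, μa)` for some composition
`L` of `d` and some partition `b'` which is zero or satisfies `b' ⪯ a`. -/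
theorem exists_bound_split (d : ℕ) (hd : 1 ≤ d) (a : Fin d → ℕ)
    (ha : IsPartition d a) (ha0 : a ≠ 0) :
    ∃ N : ℕ, ∀ b : Fin d → ℕ, IsPartition d b → b ≠ 0 → ExtDom d b a →
      N < weight d b →
        ∃ L : List ℕ, IsComposition d L ∧
          ∃ b' : Fin d → ℕ, IsPartition d b' ∧
            (b' = 0 ∨ ExtDom d b' a) ∧
            b = b' + vSeq d L (mu d • a) := by
  classical
  refine ⟨mu d * weight d a * (1 + d ^ 3 * weight d a), ?_⟩
  intro b hb hb0 hdom hN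
  -- basic positivity facts
  have ha00 : 0 < a ⟨0, hd⟩ := by
    by_contra hc
    push_neg at hc
    apply ha0
    funext i
    have h1 := ha ⟨0, hd⟩ i (by simp [Fin.le_def])
    simp
    omega
  have hWpos : 0 < weight d a := by
    have := Finset.single_le_sum (f := a) (fun i _ => Nat.zero_le _)
      (Finset.mem_univ ⟨0, hd⟩)
    unfold weight
    omega
  have hμpos : 0 < mu d := by
    rcases Nat.eq_zero_or_pos (mu d) with h | h
    · exfalso
      unfold mu at h
      rw [Finset.lcm_eq_zero_iff] at h
      simp only [Set.mem_image, id] at h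
      obtain ⟨x, hx, hx0⟩ := h
      simp at hx
      omega
    · exact h
  -- integer abbreviations
  set A : ℕ → ℤ := fun k => ((psum d a k : ℕ) : ℤ) with hA
  set B : ℕ → ℤ := fun k => ((psum d b k : ℕ) : ℤ) with hB
  set W : ℤ := ((weight d a : ℕ) : ℤ) with hW
  set V : ℤ := ((weight d b : ℕ) : ℤ) with hV
  set μ : ℤ := ((mu d : ℕ) : ℤ) with hμ
  have hW1 : 1 ≤ W := by simp [hW]; omega
  have hμ1 : 1 ≤ μ := by simp [hμ]; omega
  have hA1e : A 1 = (a ⟨0, hd⟩ : ℤ) := by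
    have := psum_succ d a 0 hd
    rw [psum_zero d a] at this
    simp [hA, this]
  have hA1 : 0 ≤ A 1 := by rw [hA1e]; positivity
  have hAd : ∀ k, d ≤ k → A k = W := by
    intro k hk
    simp [hA, hW, psum_of_ge d a k hk]
  have hBd : ∀ k, d ≤ k → B k = V := by
    intro k hk
    simp [hB, hV, psum_of_ge d b k hk]
  have hA0 : A 0 = 0 := by simp [hA, psum_zero]
  have hAmono : ∀ i j : ℕ, i ≤ j → A i ≤ A j := by
    intro i j hij
    simp only [hA, Nat.cast_le]
    exact psum_mono d a hij
  have hAW : ∀ k, A k ≤ W := by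
    intro k
    rcases le_or_gt d k with h | h
    · rw [hAd k h]
    · rw [← hAd d le_rfl]; exact hAmono k d h.le
  have hWB : ∀ k, W * B k ≤ V * A k := by
    intro k
    rcases Nat.eq_zero_or_pos k with rfl | hk
    · simp [hA0, hB, psum_zero]
    · rcases le_or_gt d k with h | h
      · rw [hAd k h, hBd k h, mul_comm]
      · have := hdom k hk (by omega)
        simp only [hA, hB, hW, hV]
        exact_mod_cast this
  have hBent : ∀ (j : ℕ) (hj : j < d), ((b ⟨j, hj⟩ : ℕ) : ℤ) = B (j + 1) - B j := by
    intro j hj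
    have := psum_succ d b j hj
    simp only [hB]
    push_cast [this]
    ring
  have hAent : ∀ (j : ℕ) (hj : j < d), ((a ⟨j, hj⟩ : ℕ) : ℤ) = A (j + 1) - A j := by
    intro j hj
    have := psum_succ d a j hj
    simp only [hA]
    push_cast [this]
    ring
  have hBdec : ∀ j, 1 ≤ j → j + 1 ≤ d → B (j + 1) + B (j - 1) ≤ 2 * B j := by
    intro j h1 h2
    have hj1 : j - 1 < d := by omega
    have hj2 : j < d := by omega
    have hmono := hb ⟨j - 1, hj1⟩ ⟨j, hj2⟩ (by simp only [Fin.mk_le_mk]; omega)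
    have e1 := hBent (j - 1) hj1
    have e2 := hBent j hj2
    have e3 : j - 1 + 1 = j := by omega
    rw [e3] at e1
    have : ((b ⟨j, hj2⟩ : ℕ) : ℤ) ≤ ((b ⟨j - 1, hj1⟩ : ℕ) : ℤ) := by exact_mod_cast hmono
    linarith
  have hVbig : W * (d : ℤ) ^ 3 * μ * A 1 + W * μ < V := by
    have hcast : ((mu d * weight d a * (1 + d ^ 3 * weight d a) : ℕ) : ℤ) < V := by
      simp only [hV]; exact_mod_cast hN
    have hA1W : A 1 ≤ W := hAW 1
    have hfact : (0 : ℤ) ≤ W * (d : ℤ) ^ 3 * μ :=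
      mul_nonneg (mul_nonneg (by linarith) (by positivity)) (by linarith)
    have h5 := mul_le_mul_of_nonneg_left hA1W hfact
    have hexp : ((mu d * weight d a * (1 + d ^ 3 * weight d a) : ℕ) : ℤ)
        = W * (d:ℤ)^3 * μ * W + W * μ := by
      push_cast [hW, hμ]
      ring
    rw [hexp] at hcast
    linarith
  -- obtain the composition
  obtain ⟨L, hLsum, hLgood⟩ := cutsExist (d := d) (A := A) (B := B) (W := W) (V := V) (μ := μ)
    hW1 hμ1 hA1 hWB hBdec hVbig d 0 d (by omega) (by omega) le_rfl (Or.inl rfl)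
  have hLsum' : L.sum = d := by omega
  refine ⟨L, ⟨goodL_pos _ _ L 0 hLgood, hLsum'⟩, ?_⟩
  set c : Fin d → ℕ := vSeq d L (mu d • a) with hc
  -- block data for each position
  have spec : ∀ (j : ℕ), j < d →
      0 < (blockOf L j).2 ∧ (blockOf L j).1 ≤ j ∧
      j < (blockOf L j).1 + (blockOf L j).2 ∧
      (blockOf L j).1 + (blockOf L j).2 ≤ d ∧
      ChordOK A B W V μ ((blockOf L j).1) ((blockOf L j).1 + (blockOf L j).2) ∧
      ((blockOf L j).1 + (blockOf L j).2 = d ∨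
        BigDrop d A B μ ((blockOf L j).1 + (blockOf L j).2)) ∧
      (∀ j', (blockOf L j).1 ≤ j' → j' < (blockOf L j).1 + (blockOf L j).2 →
        blockOf L j' = blockOf L j) := by
    intro j hj
    have hi : j < L.sum := by rw [hLsum']; exact hj
    obtain ⟨s1, s2, s3, s4, s5, s6, s7⟩ :=
      goodL_spec (ChordOK A B W V μ) (fun x => x = d ∨ BigDrop d A B μ x) L 0 j
        hLgood hi
    rw [hLsum'] at s4
    simp only [Nat.zero_add] at s5 s6
    exact ⟨s1, s2, s3, s4, s5, s6, s7⟩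
  -- the value of c on each block
  have hdvd : ∀ (j : ℕ), j < d → (blockOf L j).2 ∣ mu d := by
    intro j hj
    obtain ⟨s1, s2, s3, s4, _⟩ := spec j hj
    have : (blockOf L j).2 ∈ Finset.Icc 1 d := by
      simp only [Finset.mem_Icc]
      omega
    have h := Finset.dvd_lcm (f := id) (s := Finset.Icc 1 d) this
    simpa [mu] using h
  have hcbO : ∀ (i : Fin d), c i = blockSum d L (mu d • a) i / (blockOf L (i : ℕ)).2 := by
    intro i; rfl
  have hceq : ∀ (j : ℕ) (hj : j < d), c ⟨j, hj⟩ = (mu d / (blockOf L j).2) *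
      (psum d a ((blockOf L j).1 + (blockOf L j).2) - psum d a ((blockOf L j).1)) := by
    intro j hj
    obtain ⟨s1, s2, s3, s4, _⟩ := spec j hj
    have hband := psum_band d (mu d • a) ((blockOf L j).1)
      ((blockOf L j).1 + (blockOf L j).2) (by omega)
    have hbsv : blockSum d L (mu d • a) ⟨j, hj⟩ =
        ∑ j' : Fin d, if (blockOf L j).1 ≤ (j' : ℕ) ∧
          (j' : ℕ) < (blockOf L j).1 + (blockOf L j).2 then (mu d • a) j' else 0 := rfl
    have hbs : blockSum d L (mu d • a) ⟨j, hj⟩ =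
        mu d * psum d a ((blockOf L j).1 + (blockOf L j).2)
          - mu d * psum d a ((blockOf L j).1) := by
      rw [hbsv]
      rw [psum_smul, psum_smul] at hband
      omega
    have hmono := psum_mono d a (le_of_lt (by omega :
      (blockOf L j).1 < (blockOf L j).1 + (blockOf L j).2))
    have hbs2 : blockSum d L (mu d • a) ⟨j, hj⟩ = (blockOf L j).2 *
        ((mu d / (blockOf L j).2) *
          (psum d a ((blockOf L j).1 + (blockOf L j).2) - psum d a ((blockOf L j).1))) := by
      rw [hbs]
      have hmmj := Nat.div_mul_cancel (hdvd j hj)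
      cases' Nat.le.dest hmono with t ht
      rw [← ht]
      simp only [Nat.add_sub_cancel_left]
      rw [Nat.mul_add]
      have : (blockOf L j).2 * (mu d / (blockOf L j).2 * t)
          = (mu d / (blockOf L j).2) * (blockOf L j).2 * t := by ring
      rw [this, hmmj]
      omega
    show blockSum d L (mu d • a) ⟨j, hj⟩ / (blockOf L j).2 = _
    rw [hbs2, Nat.mul_div_cancel_left _ s1]
  have hmm : ∀ (j : ℕ), j < d → (mu d / (blockOf L j).2) * (blockOf L j).2 = mu d := by
    intro j hj
    exact Nat.div_mul_cancel (hdvd j hj)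
  -- c in ℤ form
  have hcZ : ∀ (j : ℕ) (hj : j < d), ((c ⟨j, hj⟩ : ℕ) : ℤ) =
      ((mu d / (blockOf L j).2 : ℕ) : ℤ) *
      (A ((blockOf L j).1 + (blockOf L j).2) - A ((blockOf L j).1)) := by
    intro j hj
    obtain ⟨s1, s2, s3, s4, _⟩ := spec j hj
    have hmono := psum_mono d a (le_of_lt (by omega :
      (blockOf L j).1 < (blockOf L j).1 + (blockOf L j).2))
    rw [hceq j hj]
    simp only [hA]
    push_cast [hmono]
    ring
  have hlcZ : ∀ (j : ℕ) (hj : j < d), ((blockOf L j).2 : ℤ) * ((c ⟨j, hj⟩ : ℕ) : ℤ) =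
      μ * (A ((blockOf L j).1 + (blockOf L j).2) - A ((blockOf L j).1)) := by
    intro j hj
    rw [hcZ j hj]
    have : ((blockOf L j).2 : ℤ) * (((mu d / (blockOf L j).2 : ℕ) : ℤ) *
        (A ((blockOf L j).1 + (blockOf L j).2) - A ((blockOf L j).1)))
        = (((mu d / (blockOf L j).2) * (blockOf L j).2 : ℕ) : ℤ) *
          (A ((blockOf L j).1 + (blockOf L j).2) - A ((blockOf L j).1)) := by
      push_cast
      ring
    rw [this, hmm j hj]
  have hccongr : ∀ (j j' : ℕ) (hj : j < d) (hj' : j' < d),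
      blockOf L j = blockOf L j' → c ⟨j, hj⟩ = c ⟨j', hj'⟩ := by
    intro j j' hj hj' hjj
    simp only [hc]
    unfold vSeq blockSum
    simp only [Fin.val_mk]
    rw [hjj]
  -- prefix sums of a grow at most A 1 per step
  have hAband : ∀ u v : ℕ, u ≤ v → v ≤ d → A v - A u ≤ ((v : ℤ) - u) * A 1 := by
    intro u v huv hvd
    have hsum : A v - A u = ∑ i ∈ Finset.range (v - u), (A (u + i + 1) - A (u + i)) := by
      have h := Finset.sum_range_sub (f := fun i => A (u + i)) (n := v - u)
      have h' : u + (v - u) = v := by omega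
      rw [h'] at h
      simpa [add_assoc] using h.symm
    rw [hsum]
    have hbd := Finset.sum_le_card_nsmul (Finset.range (v - u))
      (fun i => A (u + i + 1) - A (u + i)) (A 1) ?_
    · rw [Finset.card_range, nsmul_eq_mul] at hbd
      have hcst : ((v - u : ℕ) : ℤ) = (v : ℤ) - u := by
        push_cast [huv]
        ring
      rw [hcst] at hbd
      exact hbd
    · intro i hi
      simp only [Finset.mem_range] at hi
      have hud : u + i < d := by omega
      have := hAent (u + i) hud
      show A (u + i + 1) - A (u + i) ≤ A 1
      rw [← this, hA1e]
      have hle := ha ⟨0, hd⟩ ⟨u + i, hud⟩ (by simp only [Fin.mk_le_mk]; omega)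
      exact_mod_cast hle
  -- the partial sums of c
  have Cform : ∀ k : ℕ, 0 < k → ∀ hkd : k ≤ d,
      ((psum d c k : ℕ) : ℤ) = μ * A ((blockOf L (k - 1)).1) +
        ((k : ℤ) - ((blockOf L (k - 1)).1 : ℕ)) *
          ((c ⟨k - 1, by omega⟩ : ℕ) : ℤ) := by
    intro k
    induction k with
    | zero => omega
    | succ n ihn =>
      intro _ hkd
      have hnd : n < d := by omega
      have hps := psum_succ d c n hnd
      have hred : n + 1 - 1 = n := by omega
      rcases Nat.eq_zero_or_pos n with rfl | hn
      · -- k = 1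
        obtain ⟨s1, s2, s3, s4, _⟩ := spec 0 hd
        have hp0 : (blockOf L 0).1 = 0 := by omega
        rw [psum_zero] at hps
        simp only [hred, hps, hp0, hA0]
        push_cast
        ring
      · have hn1 : n - 1 < d := by omega
        have ih := ihn hn (by omega)
        obtain ⟨s1, s2, s3, s4, s5, s6, s7⟩ := spec (n - 1) hn1
        obtain ⟨t1, t2, t3, t4, t5, t6, t7⟩ := spec n hnd
        by_cases hcase : n < (blockOf L (n - 1)).1 + (blockOf L (n - 1)).2
        · have hbeq : blockOf L n = blockOf L (n - 1) := s7 n (by omega) hcase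
          have hceq2 : c ⟨n, hnd⟩ = c ⟨n - 1, hn1⟩ := hccongr n (n - 1) hnd hn1 hbeq
          simp only [hred, hps, hbeq]
          push_cast [ih, hceq2]
          ring
        · have hkend : n = (blockOf L (n - 1)).1 + (blockOf L (n - 1)).2 := by omega
          have hstart : (blockOf L n).1 = n := by
            by_contra hcon
            have h8 : (blockOf L n).1 < n := lt_of_le_of_ne t2 hcon
            have h9 := t7 (n - 1) (by omega) (by omega)
            rw [h9] at hkend
            omega
          have hlc := hlcZ (n - 1) hn1
          rw [← hkend] at hlc
          have hnpl : ((blockOf L (n - 1)).2 : ℤ) = (n : ℤ) - ((blockOf L (n - 1)).1 : ℕ) := by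
            omega
          rw [hnpl] at hlc
          simp only [hred, hps, hstart]
          push_cast [ih]
          linarith [hlc]
  -- total weight of c
  have hd1 : d - 1 < d := by omega
  have hCd : ((weight d c : ℕ) : ℤ) = μ * W := by
    have h0 := Cform d (by omega) le_rfl
    obtain ⟨s1, s2, s3, s4, _⟩ := spec (d - 1) hd1
    have hend : (blockOf L (d - 1)).1 + (blockOf L (d - 1)).2 = d := by omega
    have hlc := hlcZ (d - 1) hd1
    rw [hend] at hlc
    have hnpl : ((blockOf L (d - 1)).2 : ℤ) = (d : ℤ) - ((blockOf L (d - 1)).1 : ℕ) := by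
      omega
    rw [hnpl] at hlc
    rw [psum_of_ge d c d le_rfl] at h0
    rw [h0, hAd d le_rfl] at *
    linarith [hlc]
  -- adjacent decrease of b - c in ℤ
  have hadj : ∀ (j : ℕ) (hj1 : j + 1 < d),
      ((b ⟨j + 1, hj1⟩ : ℕ) : ℤ) - ((c ⟨j + 1, hj1⟩ : ℕ) : ℤ) ≤
        ((b ⟨j, by omega⟩ : ℕ) : ℤ) - ((c ⟨j, by omega⟩ : ℕ) : ℤ) := by
    intro j hj1
    have hjd : j < d := by omega
    obtain ⟨s1, s2, s3, s4, s5, s6, s7⟩ := spec j hjd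
    obtain ⟨t1, t2, t3, t4, t5, t6, t7⟩ := spec (j + 1) hj1
    have hbmono : ((b ⟨j + 1, hj1⟩ : ℕ) : ℤ) ≤ ((b ⟨j, hjd⟩ : ℕ) : ℤ) := by
      exact_mod_cast hb ⟨j, hjd⟩ ⟨j + 1, hj1⟩ (by simp only [Fin.mk_le_mk]; omega)
    by_cases hcase : j + 1 < (blockOf L j).1 + (blockOf L j).2
    · have hbeq : blockOf L (j + 1) = blockOf L j := s7 (j + 1) (by omega) hcase
      have hceq2 : c ⟨j + 1, hj1⟩ = c ⟨j, hjd⟩ := hccongr (j + 1) j hj1 hjd hbeq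
      rw [hceq2]
      linarith
    · -- boundary: big drop
      have hkend : j + 1 = (blockOf L j).1 + (blockOf L j).2 := by omega
      have hbdp : BigDrop d A B μ ((blockOf L j).1 + (blockOf L j).2) := by
        rcases s6 with h | h
        · omega
        · exact h
      rw [← hkend] at hbdp
      obtain ⟨u1, u2, u3⟩ := hbdp
      have e1 : j + 1 - 1 = j := by omega
      rw [e1] at u3
      have hbj := hBent j hjd
      have hbj1 := hBent (j + 1) hj1
      have hdrop : μ * A 1 ≤ ((b ⟨j, hjd⟩ : ℕ) : ℤ) - ((b ⟨j + 1, hj1⟩ : ℕ) : ℤ) := by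
        rw [hbj, hbj1]
        linarith
      have hcj : ((c ⟨j, hjd⟩ : ℕ) : ℤ) ≤ μ * A 1 := by
        rw [hcZ j hjd]
        have hband := hAband ((blockOf L j).1) ((blockOf L j).1 + (blockOf L j).2)
          (by omega) s4
        have hmz : (0 : ℤ) ≤ ((mu d / (blockOf L j).2 : ℕ) : ℤ) := by positivity
        have h2 := mul_le_mul_of_nonneg_left hband hmz
        refine le_trans h2 ?_
        have hcst : (((blockOf L j).1 + (blockOf L j).2 : ℕ) : ℤ) - ((blockOf L j).1 : ℕ)
            = ((blockOf L j).2 : ℤ) := by push_cast; ring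
        rw [hcst]
        have := hmm j hjd
        have hcst2 : ((mu d / (blockOf L j).2 : ℕ) : ℤ) * ((blockOf L j).2 : ℤ) = μ := by
          rw [hμ]
          exact_mod_cast this
        rw [← mul_assoc, hcst2]
      have hcnn : (0 : ℤ) ≤ ((c ⟨j + 1, hj1⟩ : ℕ) : ℤ) := by positivity
      linarith
  -- nonnegativity at the last entry
  have hVμW : W * μ ≤ V := by
    have hnn : (0:ℤ) ≤ W * (d:ℤ)^3 * μ * A 1 :=
      mul_nonneg (mul_nonneg (mul_nonneg (by linarith) (by positivity)) (by linarith)) hA1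
    linarith
  have hlast : ((c ⟨d - 1, hd1⟩ : ℕ) : ℤ) ≤ ((b ⟨d - 1, hd1⟩ : ℕ) : ℤ) := by
    obtain ⟨s1, s2, s3, s4, s5, s6, s7⟩ := spec (d - 1) hd1
    have hend : (blockOf L (d - 1)).1 + (blockOf L (d - 1)).2 = d := by omega
    have hbe : ((b ⟨d - 1, hd1⟩ : ℕ) : ℤ) = V - B (d - 1) := by
      have := hBent (d - 1) hd1
      have e1 : d - 1 + 1 = d := by omega
      rw [e1] at this
      rw [this, hBd d le_rfl]
    have hAD1 : A (d - 1) ≤ W := hAW (d - 1)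
    by_cases hp : (blockOf L (d - 1)).1 = d - 1
    · -- block of length 1
      have hl1 : (blockOf L (d - 1)).2 = 1 := by omega
      have hce : ((c ⟨d - 1, hd1⟩ : ℕ) : ℤ) = μ * (W - A (d - 1)) := by
        rw [hcZ (d - 1) hd1, hend, hp, hl1, hAd d le_rfl]
        norm_num [hμ]
      have hWBd1 := hWB (d - 1)
      have hkey : W * ((b ⟨d - 1, hd1⟩ : ℕ) : ℤ) ≥ W * ((c ⟨d - 1, hd1⟩ : ℕ) : ℤ) := by
        rw [hbe, hce]
        have h2 : W * μ * (W - A (d - 1)) ≤ V * (W - A (d - 1)) :=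
          mul_le_mul_of_nonneg_right hVμW (by linarith)
        have h3 : W * V - W * B (d - 1) ≥ W * V - V * A (d - 1) := by linarith
        nlinarith [h2, h3]
      have hWpos' : (0 : ℤ) < W := by linarith
      exact le_of_mul_le_mul_left hkey hWpos'
    · -- longer block: use the chord condition at d - 1
      have hpd : (blockOf L (d - 1)).1 < d - 1 := lt_of_le_of_ne s2 hp
      have hch := s5 (d - 1) hpd (by omega)
      rw [hend] at hch
      have hce := hcZ (d - 1) hd1
      rw [hend] at hce
      set p : ℕ := (blockOf L (d - 1)).1 with hpdef
      set l : ℕ := (blockOf L (d - 1)).2 with hldef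
      set mq : ℤ := ((mu d / l : ℕ) : ℤ) with hmqdef
      have hml : mq * (l : ℤ) = μ := by
        rw [hμ, hmqdef]
        exact_mod_cast hmm (d - 1) hd1
      have hlq : ((l : ℕ) : ℤ) = (d : ℤ) - (p : ℕ) := by omega
      have hd1c : ((d - 1 : ℕ) : ℤ) = (d : ℤ) - 1 := by omega
      rw [hAd d le_rfl] at hch hce
      rw [hd1c] at hch
      -- key computation
      have hkey : W * (l : ℤ) * (((b ⟨d - 1, hd1⟩ : ℕ) : ℤ) - ((c ⟨d - 1, hd1⟩ : ℕ) : ℤ))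
          = (l : ℤ) * (W - A (d - 1)) * (V - W * μ)
            + (((d : ℤ) - p) * (V * A (d - 1) - W * B (d - 1))
              - W * μ * (((d : ℤ) - p) * A (d - 1) - ((d : ℤ) - 1 - p) * W
                - ((d : ℤ) - ((d : ℤ) - 1)) * A p)) := by
        rw [hbe, hce, ← hml, hlq]
        ring
      have hbr : 0 ≤ ((d : ℤ) - p) * (V * A (d - 1) - W * B (d - 1))
          - W * μ * (((d : ℤ) - p) * A (d - 1) - ((d : ℤ) - 1 - p) * W
            - ((d : ℤ) - ((d : ℤ) - 1)) * A p) := by linarith [hch]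
      have hpr : 0 ≤ ((l : ℕ) : ℤ) * (W - A (d - 1)) * (V - W * μ) :=
        mul_nonneg (mul_nonneg (by positivity) (by linarith)) (by linarith)
      have hfin : 0 ≤ W * (l : ℤ) * (((b ⟨d - 1, hd1⟩ : ℕ) : ℤ) - ((c ⟨d - 1, hd1⟩ : ℕ) : ℤ)) := by
        rw [hkey]
        linarith
      have hWl : (0 : ℤ) < W * (l : ℤ) := by
        have hl0 : (0:ℤ) < (l:ℤ) := by exact_mod_cast s1
        positivity
      have h10 : W * (l : ℤ) * 0 ≤ W * (l : ℤ) *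
          (((b ⟨d - 1, hd1⟩ : ℕ) : ℤ) - ((c ⟨d - 1, hd1⟩ : ℕ) : ℤ)) := by
        simpa using hfin
      have h11 := le_of_mul_le_mul_left h10 hWl
      linarith
  -- the difference function
  set D : Fin d → ℤ := fun i => ((b i : ℕ) : ℤ) - ((c i : ℕ) : ℤ) with hD
  have hadjD : ∀ (j : ℕ) (hj1 : j + 1 < d), D ⟨j + 1, hj1⟩ ≤ D ⟨j, by omega⟩ := by
    intro j hj1
    simpa [hD] using hadj j hj1
  have hchain : ∀ (t j : ℕ) (hjt : j + t < d), D ⟨j + t, hjt⟩ ≤ D ⟨j, by omega⟩ := by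
    intro t
    induction t with
    | zero => intro j hjt; exact le_refl _
    | succ m ih =>
      intro j hjt
      have h1 := hadjD (j + m) (by omega)
      have h2 := ih j (by omega)
      have e1 : j + (m + 1) = j + m + 1 := by omega
      calc D ⟨j + (m + 1), hjt⟩ = D ⟨j + m + 1, by omega⟩ := by
            apply congrArg
            apply Fin.ext
            exact e1
        _ ≤ D ⟨j + m, by omega⟩ := h1
        _ ≤ D ⟨j, by omega⟩ := h2
  have hchain2 : ∀ i j : Fin d, i ≤ j → D j ≤ D i := by
    intro i j hij
    have hij' : (i : ℕ) ≤ (j : ℕ) := hij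
    have hjt : (i : ℕ) + ((j : ℕ) - (i : ℕ)) < d := by omega
    have h := hchain ((j : ℕ) - (i : ℕ)) (i : ℕ) hjt
    have e1 : (⟨(i : ℕ) + ((j : ℕ) - (i : ℕ)), hjt⟩ : Fin d) = j := by
      apply Fin.ext
      simp only [Fin.val_mk]
      omega
    have e2 : (⟨(i : ℕ), by omega⟩ : Fin d) = i := by
      apply Fin.ext
      simp only [Fin.val_mk]
    rwa [e1, e2] at h
  have hlastD : 0 ≤ D ⟨d - 1, hd1⟩ := by
    simp only [hD]
    linarith [hlast]
  have hcb : ∀ i : Fin d, c i ≤ b i := by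
    intro i
    have h1 := hchain2 i ⟨d - 1, hd1⟩ (by simp only [Fin.le_def]; omega)
    have : (0 : ℤ) ≤ D i := le_trans hlastD h1
    simp only [hD] at this
    exact_mod_cast by linarith [this]
  refine ⟨fun i => b i - c i, ?_, ?_, ?_⟩
  · -- partition
    intro i j hij
    have h1 := hchain2 i j hij
    simp only [hD] at h1
    have h2 : ((b j - c j : ℕ) : ℤ) ≤ ((b i - c i : ℕ) : ℤ) := by
      push_cast [hcb i, hcb j]
      linarith
    exact_mod_cast h2
  · -- extended dominance
    right
    have hsum' : ∀ k, psum d (fun i => b i - c i) k + psum d c k = psum d b k := by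
      intro k
      unfold psum
      rw [← Finset.sum_add_distrib]
      apply Finset.sum_congr rfl
      intro i _
      by_cases hik : (i : ℕ) < k
      · simp only [hik, if_true]
        exact Nat.sub_add_cancel (hcb i)
      · simp [hik]
    have hwc : (weight d c : ℤ) = μ * W := hCd
    have hwb' : ((weight d (fun i => b i - c i) : ℕ) : ℤ) = V - μ * W := by
      have h0 := hsum' d
      rw [psum_of_ge d _ d le_rfl, psum_of_ge d _ d le_rfl, psum_of_ge d _ d le_rfl] at h0
      have : ((weight d (fun i => b i - c i) : ℕ) : ℤ) + (weight d c : ℤ)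
          = (weight d b : ℕ) := by exact_mod_cast h0
      rw [hwc] at this
      simp only [hV] at *
      linarith
    intro k hk1 hkd
    have hkd' : k < d := by omega
    have hkd'' : k ≤ d := by omega
    have hCk := Cform k (by omega) hkd''
    have hj1 : k - 1 < d := by omega
    obtain ⟨s1, s2, s3, s4, s5, s6, s7⟩ := spec (k - 1) hj1
    have hpk : (blockOf L (k - 1)).1 < k := by omega
    have hkpl : k ≤ (blockOf L (k - 1)).1 + (blockOf L (k - 1)).2 := by omega
    have hgoalZ : W * ((psum d (fun i => b i - c i) k : ℕ) : ℤ) ≤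
        (V - μ * W) * A k := by
      have hpk' : ((psum d (fun i => b i - c i) k : ℕ) : ℤ) = B k - (psum d c k : ℤ) := by
        have h0 := hsum' k
        have : ((psum d (fun i => b i - c i) k : ℕ) : ℤ) + (psum d c k : ℤ)
            = (psum d b k : ℕ) := by exact_mod_cast h0
        simp only [hB]
        linarith
      rw [hpk', hCk]
      rcases lt_or_eq_of_le hkpl with hcase | hcase
      · -- strictly inside the block
        have hch := s5 k hpk hcase
        have hlc := hlcZ (k - 1) hj1
        have hlc2 := congrArg (fun z => (((k : ℤ) - ((blockOf L (k - 1)).1 : ℕ))) * z) hlc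
        have hl0 : (0 : ℤ) < ((blockOf L (k - 1)).2 : ℤ) := by exact_mod_cast s1
        have hmul : ((blockOf L (k - 1)).2 : ℤ) *
            (W * (B k - (μ * A ((blockOf L (k - 1)).1) +
              ((k : ℤ) - ((blockOf L (k - 1)).1 : ℕ)) * ((c ⟨k - 1, hj1⟩ : ℕ) : ℤ)))) ≤
            ((blockOf L (k - 1)).2 : ℤ) * ((V - μ * W) * A k) := by
          have hlc3 := congrArg (fun z => W * z) hlc2
          push_cast at hch hlc3 ⊢
          linarith [hch, hlc3]
        exact le_of_mul_le_mul_left hmul hl0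
      · -- k is the end of the block
        have hlc := hlcZ (k - 1) hj1
        rw [← hcase] at hlc
        have hnpl : ((blockOf L (k - 1)).2 : ℤ) = (k : ℤ) - ((blockOf L (k - 1)).1 : ℕ) := by
          omega
        rw [hnpl] at hlc
        have hWBk := hWB k
        have hlc3 := congrArg (fun z => W * z) hlc
        linarith [hWBk, hlc3]
    have hgoalN : weight d a * psum d (fun i => b i - c i) k ≤
        weight d (fun i => b i - c i) * psum d a k := by
      have hr : ((weight d (fun i => b i - c i) * psum d a k : ℕ) : ℤ)
          = (V - μ * W) * A k := by
        push_cast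
        rw [hwb']
        try simp [hA]
      have hl : ((weight d a * psum d (fun i => b i - c i) k : ℕ) : ℤ)
          = W * ((psum d (fun i => b i - c i) k : ℕ) : ℤ) := by
        push_cast
        try simp [hW]
      have := hgoalZ
      rw [← hr, ← hl] at this
      exact_mod_cast this
    exact hgoalN
  · -- the decomposition
    funext i
    simp only [Pi.add_apply]
    exact (Nat.sub_add_cancel (hcb i)).symm
end

section
/- Let d ≥ 1 and let a be a nonzero partition of length d. Then the set Z(a) ∪ {0} ⊆ ℕ^d, where Z(a) is the set of nonzero partitions b of length d with b ⪯ a in the extended dominance order, is a finitely generated additive submonoid of ℕ^d (with componentwise addition). -/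
open Finset

/-- Core lemma: a submonoid of `ℕ^κ` (κ finite) closed under truncated subtraction
is finitely generated. -/
lemma core_fg {κ : Type} [Fintype κ] (S : AddSubmonoid (κ → ℕ))
    (hsub : ∀ p ∈ S, ∀ q ∈ S, q ≤ p → p - q ∈ S) : S.FG := by
  classical
  set Mn : Set (κ → ℕ) :=
    {x | x ∈ S ∧ x ≠ 0 ∧ ∀ y ∈ S, y ≠ 0 → y ≤ x → y = x} with hMn
  have hanti : IsAntichain (· ≤ ·) Mn := by
    intro x hx y hy hne hle
    exact hne (hy.2.2 x hx.1 hx.2.1 hle)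
  have hfin : Mn.Finite :=
    hanti.finite_of_partiallyWellOrderedOn (Set.isPWO_of_wellQuasiOrderedLE Mn)
  have hmain : ∀ n : ℕ, ∀ x ∈ S, (∑ i, x i) ≤ n → x ∈ AddSubmonoid.closure Mn := by
    intro n
    induction n with
    | zero =>
        intro x hx hn
        have : x = 0 := by
          funext i
          have := Finset.sum_eq_zero_iff.mp (Nat.le_zero.mp hn) i (Finset.mem_univ i)
          simpa using this
        rw [this]
        exact (AddSubmonoid.closure Mn).zero_mem
    | succ n ih =>
        intro x hx hn
        by_cases hx0 : x = 0
        · rw [hx0]; exact (AddSubmonoid.closure Mn).zero_mem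
        · set T : Set (κ → ℕ) := {y | y ∈ S ∧ y ≠ 0 ∧ y ≤ x} with hT
          have hTne : T.Nonempty := ⟨x, hx, hx0, le_refl x⟩
          have hwf : T.IsWF := (Set.isPWO_of_wellQuasiOrderedLE T).isWF
          set m := hwf.min hTne with hm
          have hmT : m ∈ T := hwf.min_mem hTne
          have hmin : ∀ y ∈ T, ¬ y < m := fun y hy => hwf.not_lt_min hTne hy
          have hmMn : m ∈ Mn := by
            refine ⟨hmT.1, hmT.2.1, fun y hy hy0 hyx => ?_⟩
            have hyT : y ∈ T := ⟨hy, hy0, hyx.trans hmT.2.2⟩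
            have := hmin y hyT
            by_contra hne
            exact this (lt_of_le_of_ne hyx hne)
          have hxm : x - m ∈ S := hsub x hx m hmT.1 hmT.2.2
          have heq : m + (x - m) = x := by
            funext i
            exact Nat.add_sub_cancel' (hmT.2.2 i)
          have hmpos : 1 ≤ ∑ i, m i := by
            rcases Function.ne_iff.mp hmT.2.1 with ⟨i, hi⟩
            calc 1 ≤ m i := Nat.one_le_iff_ne_zero.mpr (by simpa using hi)
            _ ≤ ∑ j, m j := Finset.single_le_sum (fun _ _ => Nat.zero_le _) (Finset.mem_univ i)
          have hsum : (∑ i, (x - m) i) ≤ n := by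
            have : (∑ i, m i) + (∑ i, (x - m) i) = ∑ i, x i := by
              rw [← Finset.sum_add_distrib]
              exact Finset.sum_congr rfl fun i _ => by
                have := congrFun heq i
                simpa [Pi.add_apply] using this
            omega
          have h1 : (x - m) ∈ AddSubmonoid.closure Mn := ih _ hxm hsum
          have h2 : m ∈ AddSubmonoid.closure Mn := AddSubmonoid.subset_closure hmMn
          have := AddSubmonoid.add_mem _ h2 h1
          rwa [heq] at this
  rw [AddSubmonoid.fg_iff]
  refine ⟨Mn, le_antisymm ?_ ?_, hfin⟩
  · rw [AddSubmonoid.closure_le]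
    exact fun x hx => hx.1
  · exact fun x hx => hmain (∑ i, x i) x hx le_rfl

/-- Sets cut out by finitely many inequalities between `ℕ`-linear maps are
finitely generated submonoids of `ℕ^d`. -/
lemma ineq_fg {d : ℕ} {ι : Type} [Fintype ι] (F G : ι → ((Fin d → ℕ) →+ ℕ)) :
    ∃ M : AddSubmonoid (Fin d → ℕ),
      (M : Set (Fin d → ℕ)) = {x | ∀ i, F i x ≤ G i x} ∧ M.FG := by
  classical
  -- the extended submonoid in ℕ^(Fin d ⊕ ι) recording the slacks
  set S : AddSubmonoid ((Fin d ⊕ ι) → ℕ) :=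
    { carrier := {p | ∀ i : ι, p (Sum.inr i) + F i (fun j => p (Sum.inl j))
                      = G i (fun j => p (Sum.inl j))}
      zero_mem' := by
        intro i
        show (0:ℕ) + F i 0 = G i 0
        simp
      add_mem' := by
        intro p q hp hq i
        have hp' := hp i; have hq' := hq i
        show (p + q) (Sum.inr i) + F i (fun j => (p + q) (Sum.inl j))
            = G i (fun j => (p + q) (Sum.inl j))
        have hre : (fun j => (p + q) (Sum.inl j))
            = (fun j => p (Sum.inl j)) + (fun j => q (Sum.inl j)) := rfl
        have hpq : (p + q) (Sum.inr i) = p (Sum.inr i) + q (Sum.inr i) := rfl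
        rw [hre, map_add, map_add, hpq]
        omega } with hS
  have hsub : ∀ p ∈ S, ∀ q ∈ S, q ≤ p → p - q ∈ S := by
    intro p hp q hq hle i
    have hp' := hp i; have hq' := hq i
    have hle1 : (fun j => q (Sum.inl j)) ≤ (fun j => p (Sum.inl j)) := fun j => hle _
    have hdecomp : (fun j => p (Sum.inl j)) =
        (fun j => q (Sum.inl j)) + (fun j => (p - q) (Sum.inl j)) := by
      funext j
      exact (Nat.add_sub_cancel' (hle (Sum.inl j))).symm
    have hF : F i (fun j => p (Sum.inl j))
        = F i (fun j => q (Sum.inl j)) + F i (fun j => (p - q) (Sum.inl j)) := by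
      rw [hdecomp, map_add]
    have hG : G i (fun j => p (Sum.inl j))
        = G i (fun j => q (Sum.inl j)) + G i (fun j => (p - q) (Sum.inl j)) := by
      rw [hdecomp, map_add]
    have hle2 : q (Sum.inr i) ≤ p (Sum.inr i) := hle (Sum.inr i)
    show (p - q) (Sum.inr i) + F i (fun j => (p - q) (Sum.inl j))
        = G i (fun j => (p - q) (Sum.inl j))
    have hsub' : (p - q) (Sum.inr i) = p (Sum.inr i) - q (Sum.inr i) := rfl
    omega
  have hFG : S.FG := core_fg S hsub
  -- project to the first d coordinates
  let π : ((Fin d ⊕ ι) → ℕ) →+ (Fin d → ℕ) :=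
    { toFun := fun p j => p (Sum.inl j)
      map_zero' := rfl
      map_add' := fun _ _ => rfl }
  refine ⟨S.map π, ?_, hFG.map π⟩
  ext x
  simp only [AddSubmonoid.coe_map, Set.mem_image, SetLike.mem_coe, Set.mem_setOf_eq]
  constructor
  · rintro ⟨p, hp, rfl⟩ i
    have h := hp i
    show F i (fun j => p (Sum.inl j)) ≤ G i (fun j => p (Sum.inl j))
    omega
  · intro hx
    refine ⟨Sum.elim x (fun i => G i x - F i x), fun i => ?_, rfl⟩
    show G i x - F i x + F i x = G i x
    exact Nat.sub_add_cancel (hx i)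


/-- `Z(a) ∪ {0}` is a finitely generated additive submonoid of `ℕ^d`. -/
theorem Za_fg_submonoid (d : ℕ) (hd : 1 ≤ d) (a : Fin d → ℕ)
    (ha : IsPartition d a) (ha0 : a ≠ 0) :
    ∃ M : AddSubmonoid (Fin d → ℕ),
      (M : Set (Fin d → ℕ)) =
        {b : Fin d → ℕ | b = 0 ∨ (IsPartition d b ∧ b ≠ 0 ∧ ExtDom d b a)} ∧
      M.FG := by
  classical
  -- the linear maps
  let ev : Fin d → ((Fin d → ℕ) →+ ℕ) := fun j => Pi.evalAddMonoidHom (fun _ => ℕ) j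
  let wt : (Fin d → ℕ) →+ ℕ :=
    { toFun := fun b => weight d b
      map_zero' := by simp [weight]
      map_add' := fun b c => by
        simp [weight, Finset.sum_add_distrib] }
  let ps : ℕ → ((Fin d → ℕ) →+ ℕ) := fun k =>
    { toFun := fun b => psum d b k
      map_zero' := by simp [psum]
      map_add' := fun b c => by
        simp only [psum, Pi.add_apply, ← Finset.sum_add_distrib]
        exact Finset.sum_congr rfl fun i _ => by split <;> simp }
  let F : (Fin d × Fin d) ⊕ Fin d → ((Fin d → ℕ) →+ ℕ) := fun i =>
    match i with
    | Sum.inl (i, j) => if i ≤ j then ev j else 0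
    | Sum.inr k => if 1 ≤ (k : ℕ) ∧ (k : ℕ) ≤ d - 1 then weight d a • ps (k : ℕ) else 0
  let G : (Fin d × Fin d) ⊕ Fin d → ((Fin d → ℕ) →+ ℕ) := fun i =>
    match i with
    | Sum.inl (i, j) => if i ≤ j then ev i else 0
    | Sum.inr k => if 1 ≤ (k : ℕ) ∧ (k : ℕ) ≤ d - 1 then psum d a (k : ℕ) • wt else 0
  obtain ⟨M, hMset, hMfg⟩ := ineq_fg F G
  refine ⟨M, ?_, hMfg⟩
  rw [hMset]
  ext b
  simp only [Set.mem_setOf_eq]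
  have key : (∀ i, F i b ≤ G i b) ↔ (IsPartition d b ∧ ExtDom d b a) := by
    constructor
    · intro h
      constructor
      · intro i j hij
        have := h (Sum.inl (i, j))
        simpa [F, G, ev, if_pos hij, Pi.evalAddMonoidHom] using this
      · intro k hk1 hk2
        have hkd : k < d := lt_of_le_of_lt hk2 (Nat.sub_lt (by omega) one_pos)
        have := h (Sum.inr ⟨k, hkd⟩)
        simp only [F, G, ev] at this
        rw [if_pos ⟨hk1, hk2⟩, if_pos ⟨hk1, hk2⟩] at this
        simp [wt, ps, mul_comm] at this ⊢
        exact this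
    · rintro ⟨hP, hE⟩ i
      match i with
      | Sum.inl (i, j) =>
          by_cases hij : i ≤ j
          · simpa [F, G, ev, if_pos hij, Pi.evalAddMonoidHom] using hP i j hij
          · simp [F, G, if_neg hij]
      | Sum.inr k =>
          by_cases hk : 1 ≤ (k : ℕ) ∧ (k : ℕ) ≤ d - 1
          · have := hE (k : ℕ) hk.1 hk.2
            simp only [F, G]
            rw [if_pos hk, if_pos hk]
            simp [wt, ps, mul_comm] at this ⊢
            exact this
          · simp [F, G, if_neg hk]
  rw [key]
  constructor
  · rintro ⟨hP, hE⟩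
    by_cases hb : b = 0
    · exact Or.inl hb
    · exact Or.inr ⟨hP, hb, hE⟩
  · rintro (rfl | ⟨hP, hb, hE⟩)
    · refine ⟨fun i j _ => le_refl 0, fun k _ _ => ?_⟩
      simp [weight, psum]
    · exact ⟨hP, hE⟩
end
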